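/- arXiv:1407.1662 — 3 statements merged into one kernel-verified Lean document; each statement's English description precedes it below -/
import Mathlib

section
/- Let W be the block-diagonal graphon with parameter 0 < α ≤ 1: W(x,y) = 1/α² if 0 ≤ x,y ≤ α and W(x,y) = 0 otherwise. Let 0 ≤ h ≤ 1 with 1 − α ≥ h. Then for every q ≥ 1 and symmetric q×q matrix J, the lower threshold ground state energy with threshold c = h/q equals the unrestricted ground state energy of the constant-1 graphon: E^{h/q}(W, J) = E(𝟙, J), where 𝟙 denotes the graphon identically equal to 1 and E(𝟙,J) = inf over all q-fractional partitions ρ of −Σ_{i,j} J_{ij} ∫∫ ρ_i(x)ρ_j(y) dx dy. -/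
open MeasureTheory Filter

noncomputable section

/-- The unit interval as a subset of ℝ. -/
def I01 : Set ℝ := Set.Icc 0 1

/-- A `q`-fractional partition: measurable functions `ρ i : [0,1] → [0,1]`
summing pointwise to `1` on `[0,1]`. -/
structure FracPartition (q : ℕ) where
  toFun : Fin q → ℝ → ℝ
  measurable : ∀ i, Measurable (toFun i)
  mem_I01 : ∀ i x, x ∈ I01 → toFun i x ∈ I01
  sum_one : ∀ x ∈ I01, ∑ i, toFun i x = 1

/-- Energy of a fractional partition with respect to a graphon `W` and matrix `J`. -/
def energy {q : ℕ} (W : ℝ → ℝ → ℝ) (J : Matrix (Fin q) (Fin q) ℝ)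
    (ρ : FracPartition q) : ℝ :=
  - ∑ i, ∑ j, J i j * ∫ x in I01, ∫ y in I01, ρ.toFun i x * ρ.toFun j y * W x y

/-- `a` is a probability distribution on `Fin q`. -/
def IsDist {q : ℕ} (a : Fin q → ℝ) : Prop :=
  (∀ i, 0 ≤ a i) ∧ ∑ i, a i = 1

/-- Microcanonical ground state energy. -/
def mgse {q : ℕ} (W : ℝ → ℝ → ℝ) (J : Matrix (Fin q) (Fin q) ℝ) (a : Fin q → ℝ) : ℝ :=
  sInf {e | ∃ ρ : FracPartition q, (∀ i, (∫ x in I01, ρ.toFun i x) = a i) ∧ e = energy W J ρ}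

/-- General lower threshold ground state energy with threshold vector `x`. -/
def ltgseV {q : ℕ} (W : ℝ → ℝ → ℝ) (J : Matrix (Fin q) (Fin q) ℝ) (x : Fin q → ℝ) : ℝ :=
  sInf {e | ∃ a : Fin q → ℝ, IsDist a ∧ (∀ i, x i ≤ a i) ∧ e = mgse W J a}

/-- Homogeneous lower threshold ground state energy with scalar threshold `c`. -/
def ltgse {q : ℕ} (W : ℝ → ℝ → ℝ) (J : Matrix (Fin q) (Fin q) ℝ) (c : ℝ) : ℝ :=
  ltgseV W J (fun _ => c)

/-- Unrestricted ground state energy. -/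
def gse {q : ℕ} (W : ℝ → ℝ → ℝ) (J : Matrix (Fin q) (Fin q) ℝ) : ℝ :=
  sInf {e | ∃ ρ : FracPartition q, e = energy W J ρ}

/-- `W` is a graphon: a bounded symmetric measurable function. -/
def IsGraphon (W : ℝ → ℝ → ℝ) : Prop :=
  Measurable (Function.uncurry W) ∧ (∀ x y, W x y = W y x) ∧ ∃ M, ∀ x y, |W x y| ≤ M

open scoped Classical in
/-- Block-diagonal graphon: `β₁` on `[0,α]²`, `β₂` on `(α,1]²`, `0` elsewhere. -/
def blockW (α β₁ β₂ : ℝ) : ℝ → ℝ → ℝ :=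
  fun x y => if x ≤ α ∧ y ≤ α then β₁ else if α < x ∧ α < y then β₂ else 0

namespace Stmt13

lemma measurableSet_I01 : MeasurableSet I01 := measurableSet_Icc

lemma volume_I01 : (MeasureTheory.volume I01) = 1 := by
  simp [I01, Real.volume_Icc]

lemma integrableOn_bdd {f : ℝ → ℝ} (hf : Measurable f) (C : ℝ)
    (hb : ∀ x ∈ I01, |f x| ≤ C) : IntegrableOn f I01 := by
  refine Measure.integrableOn_of_bounded (M := C) (by simp [volume_I01]) hf.aestronglyMeasurable ?_
  filter_upwards [ae_restrict_mem measurableSet_I01] with x hx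
  simpa using hb x hx

/-- The quadratic form. -/
def K {q : ℕ} (J : Matrix (Fin q) (Fin q) ℝ) (u : Fin q → ℝ) : ℝ :=
  - ∑ i, ∑ j, J i j * (u i * u j)

lemma energy_factor {q : ℕ} (J : Matrix (Fin q) (Fin q) ℝ) (w : ℝ → ℝ)
    (ρ : FracPartition q) :
    energy (fun x y => w x * w y) J ρ
      = K J (fun i => ∫ x in I01, ρ.toFun i x * w x) := by
  unfold energy K
  congr 1
  refine Finset.sum_congr rfl fun i _ => Finset.sum_congr rfl fun j _ => ?_
  congr 1
  calc ∫ x in I01, ∫ y in I01, ρ.toFun i x * ρ.toFun j y * (w x * w y)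
      = ∫ x in I01, (ρ.toFun i x * w x) * ∫ y in I01, ρ.toFun j y * w y := by
        refine setIntegral_congr_fun measurableSet_I01 fun x _ => ?_
        rw [← integral_const_mul]
        refine setIntegral_congr_fun measurableSet_I01 fun y _ => by ring
    _ = (∫ x in I01, ρ.toFun i x * w x) * ∫ y in I01, ρ.toFun j y * w y := by
        rw [integral_mul_const]

lemma isDist_proj {q : ℕ} (ρ : FracPartition q) (w : ℝ → ℝ) (hw : Measurable w)
    (C : ℝ) (hb : ∀ x, |w x| ≤ C) (hw0 : ∀ x, 0 ≤ w x)
    (hw1 : (∫ x in I01, w x) = 1) :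
    IsDist (fun i => ∫ x in I01, ρ.toFun i x * w x) := by
  have hint : ∀ i : Fin q, IntegrableOn (fun x => ρ.toFun i x * w x) I01 := by
    intro i
    refine integrableOn_bdd ((ρ.measurable i).mul hw) C fun x hx => ?_
    rw [abs_mul]
    have h1 : |ρ.toFun i x| ≤ 1 := by
      have := ρ.mem_I01 i x hx
      rw [abs_le]; exact ⟨by linarith [this.1], this.2⟩
    calc |ρ.toFun i x| * |w x| ≤ 1 * |w x| := by
          exact mul_le_mul_of_nonneg_right h1 (abs_nonneg _)
      _ = |w x| := one_mul _
      _ ≤ C := hb x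
  constructor
  · intro i
    exact setIntegral_nonneg measurableSet_I01 fun x hx =>
      mul_nonneg (ρ.mem_I01 i x hx).1 (hw0 x)
  · rw [← integral_finset_sum _ (fun i _ => hint i)]
    rw [show (∫ x in I01, ∑ i, ρ.toFun i x * w x) = ∫ x in I01, w x from
      setIntegral_congr_fun measurableSet_I01 fun x hx => by
        rw [← Finset.sum_mul, ρ.sum_one x hx, one_mul]]
    exact hw1

lemma dist_le_one {q : ℕ} {u : Fin q → ℝ} (hu : IsDist u) (i : Fin q) : u i ≤ 1 := by
  calc u i ≤ ∑ j, u j := Finset.single_le_sum (fun j _ => hu.1 j) (Finset.mem_univ i)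
    _ = 1 := hu.2

/-- Constant fractional partition from a distribution. -/
def constFP {q : ℕ} (u : Fin q → ℝ) (hu : IsDist u) : FracPartition q where
  toFun i _ := u i
  measurable _ := measurable_const
  mem_I01 i _ _ := ⟨hu.1 i, dist_le_one hu i⟩
  sum_one _ _ := hu.2

lemma integral_const_I01 (c : ℝ) : (∫ _x in I01, c) = c := by
  rw [setIntegral_const, measureReal_def, volume_I01]; simp

lemma integral_ite_le {a c : ℝ} (h0 : 0 ≤ a) (h1 : a ≤ 1) :
    (∫ x in I01, (if x ≤ a then c else 0)) = c * a := by
  have : (fun x : ℝ => if x ≤ a then c else 0)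
      = fun x => Set.indicator (Set.Iic a) (fun _ => c) x := by
    funext x; simp [Set.indicator_apply, Set.mem_Iic]
  rw [this, setIntegral_indicator measurableSet_Iic]
  have hset : I01 ∩ Set.Iic a = Set.Icc 0 a := by
    ext x
    simp only [I01, Set.mem_inter_iff, Set.mem_Icc, Set.mem_Iic]
    constructor
    · rintro ⟨⟨hx0, _⟩, hxa⟩; exact ⟨hx0, hxa⟩
    · rintro ⟨hx0, hxa⟩; exact ⟨⟨hx0, le_trans hxa h1⟩, hxa⟩
  rw [hset, setIntegral_const, measureReal_def, Real.volume_Icc]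
  rw [ENNReal.toReal_ofReal (by linarith)]
  simp [mul_comm]

lemma integral_ite_Ioc {l r c : ℝ} (h0 : 0 ≤ l) (hlr : l ≤ r) (h1 : r ≤ 1) :
    (∫ x in I01, (if x ∈ Set.Ioc l r then c else 0)) = c * (r - l) := by
  have : (fun x : ℝ => if x ∈ Set.Ioc l r then c else 0)
      = fun x => Set.indicator (Set.Ioc l r) (fun _ => c) x := by
    funext x; simp [Set.indicator_apply]
  rw [this, setIntegral_indicator measurableSet_Ioc]
  have hset : I01 ∩ Set.Ioc l r = Set.Ioc l r := by
    apply Set.inter_eq_self_of_subset_right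
    intro x hx
    exact ⟨le_trans h0 (le_of_lt hx.1), le_trans hx.2 h1⟩
  rw [hset, setIntegral_const, measureReal_def, Real.volume_Ioc]
  rw [ENNReal.toReal_ofReal (by linarith)]
  simp [mul_comm]


/-- Indicator-style partition of `(α, 1]` giving each index mass at least `h/q`. -/
def tau (α h : ℝ) (q : ℕ) (i : Fin q) (x : ℝ) : ℝ :=
  (if x ≤ α + ((i : ℕ) + 1) * (h / q) then 1 else 0)
    - (if x ≤ α + (i : ℕ) * (h / q) then 1 else 0)
    + (if (i : ℕ) = 0 then (if α + h < x then (1 : ℝ) else 0) else 0)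

lemma tau_meas (α h : ℝ) (q : ℕ) (i : Fin q) : Measurable (tau α h q i) := by
  unfold tau
  refine Measurable.add (Measurable.sub ?_ ?_) ?_
  · exact Measurable.ite measurableSet_Iic measurable_const measurable_const
  · exact Measurable.ite measurableSet_Iic measurable_const measurable_const
  · by_cases hi : (i : ℕ) = 0
    · simp only [hi, if_true]
      exact Measurable.ite (measurableSet_Ioi (a := α + h)) measurable_const measurable_const
    · simp [hi]

section TauFacts

variable {α h : ℝ} {q : ℕ}

lemma tau_aux (hh0 : 0 ≤ h) (i : Fin q) :
    α + (i : ℕ) * (h / q) ≤ α + ((i : ℕ) + 1) * (h / q) ∧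
      α + ((i : ℕ) + 1) * (h / q) ≤ α + h := by
  have hq0 : (0 : ℝ) < q := by exact_mod_cast i.pos
  have hc : 0 ≤ h / q := div_nonneg hh0 hq0.le
  constructor
  · nlinarith
  · have hi1 : ((i : ℕ) + 1 : ℝ) ≤ q := by exact_mod_cast i.isLt
    have : ((i : ℕ) + 1 : ℝ) * (h / q) ≤ (q : ℝ) * (h / q) :=
      mul_le_mul_of_nonneg_right hi1 hc
    have hqc : (q : ℝ) * (h / q) = h := by field_simp
    linarith

lemma tau_bounds (hh0 : 0 ≤ h) (i : Fin q) (x : ℝ) : tau α h q i x ∈ Set.Icc (0 : ℝ) 1 := by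
  obtain ⟨hmono, hih⟩ := tau_aux (α := α) hh0 i
  unfold tau
  split_ifs <;> simp [Set.mem_Icc] <;> linarith

lemma tau_eq_one_on (hh0 : 0 ≤ h) (i : Fin q) {x : ℝ}
    (hx : x ∈ Set.Ioc (α + (i : ℕ) * (h / q)) (α + ((i : ℕ) + 1) * (h / q))) :
    tau α h q i x = 1 := by
  obtain ⟨hmono, hih⟩ := tau_aux (α := α) hh0 i
  have hC : ¬(α + h < x) := not_lt.2 (le_trans hx.2 hih)
  unfold tau
  rw [if_pos hx.2, if_neg (not_le.2 hx.1)]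
  simp [hC]

lemma tau_sum (hh0 : 0 ≤ h) (hq : 1 ≤ q) {x : ℝ} (hx : α < x) :
    ∑ i, tau α h q i x = 1 := by
  have hq0 : (0 : ℝ) < q := by exact_mod_cast hq
  unfold tau
  rw [Finset.sum_add_distrib]
  have key : ∑ i : Fin q, ((if x ≤ α + ((i : ℕ) + 1) * (h / q) then (1:ℝ) else 0)
      - (if x ≤ α + (i : ℕ) * (h / q) then 1 else 0))
      = (if x ≤ α + (q : ℝ) * (h / q) then (1:ℝ) else 0)
        - (if x ≤ α + (0 : ℝ) * (h / q) then 1 else 0) := by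
    rw [Fin.sum_univ_eq_sum_range (fun k : ℕ =>
      (if x ≤ α + ((k : ℝ) + 1) * (h / q) then (1:ℝ) else 0)
        - (if x ≤ α + (k : ℝ) * (h / q) then 1 else 0)) q]
    have := Finset.sum_range_sub
      (f := fun k : ℕ => if x ≤ α + (k : ℝ) * (h / q) then (1:ℝ) else 0) q
    push_cast at this
    exact this
  rw [key]
  have key2 : ∑ i : Fin q, (if (i : ℕ) = 0 then (if α + h < x then (1:ℝ) else 0) else 0)
      = (if α + h < x then (1:ℝ) else 0) := by
    have h0q : (0 : ℕ) < q := hq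
    rw [Finset.sum_eq_single (⟨0, h0q⟩ : Fin q)]
    · simp
    · intro b _ hb
      have : (b : ℕ) ≠ 0 := fun hb0 => hb (Fin.ext hb0)
      simp [this]
    · simp
  rw [key2]
  have hqc : (q : ℝ) * (h / q) = h := by field_simp
  rw [hqc]
  have hx0 : ¬ (x ≤ α + 0 * (h / q)) := by push_neg; linarith
  rw [if_neg hx0]
  by_cases hxa : x ≤ α + h
  · simp [hxa, not_lt.2 hxa]
  · simp [hxa, not_le.1 hxa]

end TauFacts

/-- The fractional partition for the block graphon realizing distribution `u` on `[0, α]`. -/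
def blockFP (α h : ℝ) (q : ℕ) (hα1 : α ≤ 1) (hh0 : 0 ≤ h) (hq : 1 ≤ q)
    (u : Fin q → ℝ) (hu : IsDist u) : FracPartition q where
  toFun i x := if x ≤ α then u i else tau α h q i x
  measurable i := Measurable.ite measurableSet_Iic measurable_const (tau_meas α h q i)
  mem_I01 i x _ := by
    by_cases hxa : x ≤ α
    · simpa [hxa, I01] using And.intro (hu.1 i) (dist_le_one hu i)
    · simpa [hxa, I01] using tau_bounds hh0 i x
  sum_one x hx := by
    by_cases hxa : x ≤ α
    · simp only [hxa, if_true]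
      exact hu.2
    · simp only [hxa, if_false]
      exact tau_sum hh0 hq (not_le.1 hxa)


section BlockFacts

variable {α h : ℝ} {q : ℕ}

lemma blockFP_proj (hα0 : 0 < α) (hα1 : α ≤ 1) (hh0 : 0 ≤ h) (hq : 1 ≤ q)
    (u : Fin q → ℝ) (hu : IsDist u) (i : Fin q) :
    (∫ x in I01, (blockFP α h q hα1 hh0 hq u hu).toFun i x * (if x ≤ α then 1/α else 0))
      = u i := by
  have heq : ∀ x : ℝ, (blockFP α h q hα1 hh0 hq u hu).toFun i x * (if x ≤ α then 1/α else 0)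
      = if x ≤ α then u i * (1/α) else 0 := by
    intro x
    by_cases hxa : x ≤ α <;> simp [blockFP, hxa]
  rw [show (fun x => (blockFP α h q hα1 hh0 hq u hu).toFun i x * (if x ≤ α then 1/α else 0))
      = fun x => if x ≤ α then u i * (1/α) else 0 from funext heq]
  rw [integral_ite_le hα0.le hα1]
  field_simp

lemma blockFP_int_ge (hα0 : 0 < α) (hα1 : α ≤ 1) (hh0 : 0 ≤ h) (hhα : h ≤ 1 - α)
    (hq : 1 ≤ q) (u : Fin q → ℝ) (hu : IsDist u) (i : Fin q) :
    h / q ≤ ∫ x in I01, (blockFP α h q hα1 hh0 hq u hu).toFun i x := by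
  have hq0 : (0 : ℝ) < q := by exact_mod_cast hq
  obtain ⟨hmono, hih⟩ := tau_aux (α := α) hh0 i
  set l : ℝ := α + (i : ℕ) * (h / q) with hl
  set r : ℝ := α + ((i : ℕ) + 1) * (h / q) with hr
  have hic : 0 ≤ ((i : ℕ) : ℝ) * (h / q) :=
    mul_nonneg (Nat.cast_nonneg _) (div_nonneg hh0 hq0.le)
  have hl0 : 0 ≤ l := by simp only [hl]; linarith
  have hr1 : r ≤ 1 := by
    have : r ≤ α + h := hih
    linarith
  have hgoal : (∫ x in I01, (if x ∈ Set.Ioc l r then (1:ℝ) else 0))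
      ≤ ∫ x in I01, (blockFP α h q hα1 hh0 hq u hu).toFun i x := by
    refine setIntegral_mono_on ?_ ?_ measurableSet_I01 ?_
    · refine integrableOn_bdd ?_ 1 fun x _ => ?_
      · exact Measurable.ite measurableSet_Ioc measurable_const measurable_const
      · split_ifs <;> simp
    · refine integrableOn_bdd ((blockFP α h q hα1 hh0 hq u hu).measurable i) 1 fun x hx => ?_
      have := (blockFP α h q hα1 hh0 hq u hu).mem_I01 i x hx
      rw [abs_le]
      exact ⟨by linarith [this.1], this.2⟩
    · intro x _
      by_cases hxm : x ∈ Set.Ioc l r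
      · rw [if_pos hxm]
        have hxα : ¬ (x ≤ α) := by
          have hαl : α ≤ l := by simp only [hl]; linarith
          push_neg
          exact lt_of_le_of_lt hαl hxm.1
        show (1:ℝ) ≤ if x ≤ α then u i else tau α h q i x
        rw [if_neg hxα, tau_eq_one_on hh0 i hxm]
      · rw [if_neg hxm]
        show (0:ℝ) ≤ if x ≤ α then u i else tau α h q i x
        split_ifs with hxa
        · exact hu.1 i
        · exact (tau_bounds hh0 i x).1
  calc h / q = 1 * (r - l) := by simp only [hl, hr]; ring
    _ = ∫ x in I01, (if x ∈ Set.Ioc l r then (1:ℝ) else 0) :=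
        (integral_ite_Ioc hl0 hmono hr1).symm
    _ ≤ _ := hgoal

lemma blockW_factor (hα0 : 0 < α) :
    blockW α (1 / α ^ 2) 0
      = fun x y => (if x ≤ α then 1/α else 0) * (if y ≤ α then 1/α else 0) := by
  funext x y
  by_cases hx : x ≤ α <;> by_cases hy : y ≤ α <;>
    simp [blockW, hx, hy, not_le] <;>
    rw [sq, mul_inv]

lemma walpha_meas : Measurable (fun x : ℝ => if x ≤ α then 1/α else 0) :=
  Measurable.ite measurableSet_Iic measurable_const measurable_const

lemma walpha_bdd (hα0 : 0 < α) : ∀ x : ℝ, |if x ≤ α then 1/α else 0| ≤ 1/α := by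
  intro x
  have h1 : (0:ℝ) ≤ 1/α := by positivity
  split_ifs
  · rw [abs_of_nonneg h1]
  · simpa using h1

lemma walpha_nonneg (hα0 : 0 < α) : ∀ x : ℝ, 0 ≤ if x ≤ α then 1/α else 0 := by
  intro x
  have h1 : (0:ℝ) ≤ 1/α := by positivity
  split_ifs
  · exact h1
  · exact le_refl 0

lemma walpha_integral (hα0 : 0 < α) (hα1 : α ≤ 1) :
    (∫ x in I01, (if x ≤ α then 1/α else 0)) = 1 := by
  rw [integral_ite_le hα0.le hα1]
  field_simp

end BlockFacts

end Stmt13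

theorem stmt13 (α h : ℝ) (hα0 : 0 < α) (hα1 : α ≤ 1) (hh0 : 0 ≤ h) (hh1 : h ≤ 1)
    (hhα : h ≤ 1 - α) (q : ℕ) (hq : 1 ≤ q) (J : Matrix (Fin q) (Fin q) ℝ)
    (hJ : J.IsSymm) :
    ltgse (blockW α (1 / α ^ 2) 0) J (h / q) = gse (fun _ _ => (1 : ℝ)) J := by
  classical
  have hq0 : (0:ℝ) < q := by exact_mod_cast hq
  set S : Set ℝ := {e | ∃ u : Fin q → ℝ, IsDist u ∧ e = Stmt13.K J u} with hSdef
  set T : Set ℝ := {e | ∃ a : Fin q → ℝ, IsDist a ∧ (∀ i, h / q ≤ a i) ∧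
      e = mgse (blockW α (1 / α ^ 2) 0) J a} with hTdef
  have hKB : ∀ u : Fin q → ℝ, IsDist u → -(∑ i, ∑ j, |J i j|) ≤ Stmt13.K J u := by
    intro u hu
    unfold Stmt13.K
    refine neg_le_neg (Finset.sum_le_sum fun i _ => Finset.sum_le_sum fun j _ => ?_)
    have hp1 : u i * u j ≤ 1 :=
      mul_le_one₀ (Stmt13.dist_le_one hu i) (hu.1 j) (Stmt13.dist_le_one hu j)
    have hp0 : 0 ≤ u i * u j := mul_nonneg (hu.1 i) (hu.1 j)
    have k1 := mul_nonneg (sub_nonneg.2 (le_abs_self (J i j))) hp0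
    have k2 := mul_nonneg (abs_nonneg (J i j)) (sub_nonneg.2 hp1)
    nlinarith
  have hS_bdd : BddBelow S := by
    refine ⟨-(∑ i, ∑ j, |J i j|), ?_⟩
    rintro e ⟨u, hu, rfl⟩
    exact hKB u hu
  have hunif : IsDist (fun _ : Fin q => (q:ℝ)⁻¹) := by
    constructor
    · intro i; positivity
    · rw [Finset.sum_const, Finset.card_univ, Fintype.card_fin, nsmul_eq_mul]
      field_simp
  have hS_ne : S.Nonempty := ⟨_, _, hunif, rfl⟩
  have hWen : ∀ ρ : FracPartition q,
      energy (blockW α (1 / α ^ 2) 0) J ρ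
        = Stmt13.K J (fun i => ∫ x in I01, ρ.toFun i x * (if x ≤ α then 1/α else 0)) := by
    intro ρ
    rw [Stmt13.blockW_factor hα0]
    exact Stmt13.energy_factor J (fun x => if x ≤ α then 1/α else 0) ρ
  have hWdist : ∀ ρ : FracPartition q,
      IsDist (fun i => ∫ x in I01, ρ.toFun i x * (if x ≤ α then 1/α else 0)) :=
    fun ρ => Stmt13.isDist_proj ρ _ Stmt13.walpha_meas (1/α) (Stmt13.walpha_bdd hα0)
      (Stmt13.walpha_nonneg hα0) (Stmt13.walpha_integral hα0 hα1)
  have h1fac : ∀ ρ : FracPartition q,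
      energy (fun _ _ => (1:ℝ)) J ρ = Stmt13.K J (fun i => ∫ x in I01, ρ.toFun i x) := by
    intro ρ
    have hrw : (fun (_ _ : ℝ) => (1:ℝ))
        = fun x y => (fun _ : ℝ => (1:ℝ)) x * (fun _ : ℝ => (1:ℝ)) y := by
      funext x y; norm_num
    rw [hrw, Stmt13.energy_factor J (fun _ => 1) ρ]
    simp
  have h1dist : ∀ ρ : FracPartition q, IsDist (fun i => ∫ x in I01, ρ.toFun i x) := by
    intro ρ
    have := Stmt13.isDist_proj ρ (fun _ => 1) measurable_const 1 (by intro x; norm_num)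
      (by intro x; norm_num) (Stmt13.integral_const_I01 1)
    simpa using this
  have hgse : gse (fun _ _ => (1:ℝ)) J = sInf S := by
    unfold gse
    congr 1
    ext e
    constructor
    · rintro ⟨ρ, rfl⟩
      exact ⟨_, h1dist ρ, h1fac ρ⟩
    · rintro ⟨u, hu, rfl⟩
      refine ⟨Stmt13.constFP u hu, ?_⟩
      rw [h1fac]
      congr 1
      funext i
      simpa [Stmt13.constFP] using (Stmt13.integral_const_I01 (u i)).symm
  have hmgse_bdd : ∀ a : Fin q → ℝ,
      BddBelow {e | ∃ ρ : FracPartition q, (∀ i, (∫ x in I01, ρ.toFun i x) = a i) ∧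
        e = energy (blockW α (1 / α ^ 2) 0) J ρ} := by
    intro a
    refine ⟨-(∑ i, ∑ j, |J i j|), ?_⟩
    rintro e ⟨ρ, -, rfl⟩
    rw [hWen ρ]
    exact hKB _ (hWdist ρ)
  have hmgse_ge : ∀ a : Fin q → ℝ, IsDist a →
      sInf S ≤ mgse (blockW α (1 / α ^ 2) 0) J a := by
    intro a ha
    unfold mgse
    apply le_csInf
    · exact ⟨energy (blockW α (1 / α ^ 2) 0) J (Stmt13.constFP a ha), Stmt13.constFP a ha,
        fun i => by simpa [Stmt13.constFP] using Stmt13.integral_const_I01 (a i), rfl⟩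
    · rintro e ⟨ρ, -, rfl⟩
      rw [hWen ρ]
      exact csInf_le hS_bdd ⟨_, hWdist ρ, rfl⟩
  have hT_lb : ∀ e ∈ T, sInf S ≤ e := by
    rintro e ⟨a, ha, -, rfl⟩
    exact hmgse_ge a ha
  have hT_bdd : BddBelow T := ⟨sInf S, hT_lb⟩
  have hT_ne : T.Nonempty := by
    refine ⟨mgse (blockW α (1 / α ^ 2) 0) J (fun _ => (q:ℝ)⁻¹), fun _ => (q:ℝ)⁻¹, hunif,
      fun i => ?_, rfl⟩
    rw [div_le_iff₀ hq0]
    rw [inv_mul_cancel₀ hq0.ne']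
    exact hh1
  have hltg : ltgse (blockW α (1 / α ^ 2) 0) J (h / q) = sInf T := rfl
  rw [hltg, hgse]
  apply le_antisymm
  · apply le_csInf hS_ne
    rintro e ⟨u, hu, rfl⟩
    have hath : ∀ i, h/q ≤ ∫ x in I01, (Stmt13.blockFP α h q hα1 hh0 hq u hu).toFun i x :=
      fun i => Stmt13.blockFP_int_ge hα0 hα1 hh0 hhα hq u hu i
    have h1 : sInf T ≤ mgse (blockW α (1 / α ^ 2) 0) J
        (fun i => ∫ x in I01, (Stmt13.blockFP α h q hα1 hh0 hq u hu).toFun i x) :=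
      csInf_le hT_bdd ⟨_, h1dist _, hath, rfl⟩
    have h2 : mgse (blockW α (1 / α ^ 2) 0) J
        (fun i => ∫ x in I01, (Stmt13.blockFP α h q hα1 hh0 hq u hu).toFun i x)
        ≤ energy (blockW α (1 / α ^ 2) 0) J (Stmt13.blockFP α h q hα1 hh0 hq u hu) :=
      csInf_le (hmgse_bdd _) ⟨_, fun i => rfl, rfl⟩
    have h3 : energy (blockW α (1 / α ^ 2) 0) J (Stmt13.blockFP α h q hα1 hh0 hq u hu)
        = Stmt13.K J u := by
      rw [hWen]
      congr 1
      funext i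
      exact Stmt13.blockFP_proj hα0 hα1 hh0 hq u hu i
    linarith
  · exact le_csInf hT_ne hT_lb
end
end

section
/- Let W be the block-diagonal graphon with parameters 0 < α < 1, β₁, β₂ ≥ 0: W = β₁ on [0,α]², W = β₂ on (α,1]², 0 elsewhere. Let q = 2 and J the 2×2 matrix with zero diagonal and off-diagonal entries 1 (MAXCUT matrix). Then the ground state energy satisfies −E(W,J) = (α²β₁ + (1−α)²β₂)/2. -/
open MeasureTheory Filter

noncomputable section

/-! ### Auxiliary lemmas -/

lemma int01 {f : ℝ → ℝ} (hf : Measurable f) (hb : ∀ x ∈ I01, f x ∈ I01)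
    {s : Set ℝ} (hs : s ⊆ I01) : IntegrableOn f s := by
  have hfin : IsFiniteMeasure (volume.restrict I01) := by
    constructor
    rw [Measure.restrict_apply_univ]
    simp [I01, Real.volume_Icc]
  have h : IntegrableOn f I01 := by
    refine Integrable.mono' (g := fun _ => (1:ℝ)) (integrable_const 1)
      hf.aestronglyMeasurable ?_
    filter_upwards [ae_restrict_mem (measurableSet_Icc : MeasurableSet I01)] with x hx
    have h2 := hb x hx
    rw [Real.norm_eq_abs, abs_le]
    exact ⟨by linarith [h2.1], h2.2⟩
  exact h.mono_set hs

lemma split_I01 (α : ℝ) (h0 : 0 ≤ α) (h1 : α ≤ 1) {h : ℝ → ℝ}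
    (h1' : IntegrableOn h (Set.Icc 0 α)) (h2' : IntegrableOn h (Set.Ioc α 1)) :
    ∫ x in I01, h x = (∫ x in Set.Icc (0:ℝ) α, h x) + ∫ x in Set.Ioc α 1, h x := by
  have hu : I01 = Set.Icc (0:ℝ) α ∪ Set.Ioc α 1 := (Set.Icc_union_Ioc_eq_Icc h0 h1).symm
  rw [hu, setIntegral_union ((Set.Iic_disjoint_Ioc le_rfl).mono Set.Icc_subset_Iic_self le_rfl)
    measurableSet_Ioc h1' h2']

lemma block_double (α β₁ β₂ : ℝ) (hα0 : 0 < α) (hα1 : α < 1)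
    {f g : ℝ → ℝ} (hf : Measurable f) (hg : Measurable g)
    (hfb : ∀ x ∈ I01, f x ∈ I01) (hgb : ∀ x ∈ I01, g x ∈ I01) :
    ∫ x in I01, ∫ y in I01, f x * g y * blockW α β₁ β₂ x y
      = β₁ * (∫ x in Set.Icc (0:ℝ) α, f x) * (∫ y in Set.Icc (0:ℝ) α, g y)
        + β₂ * (∫ x in Set.Ioc α 1, f x) * (∫ y in Set.Ioc α 1, g y) := by
  have hIcc : Set.Icc (0:ℝ) α ⊆ I01 := Set.Icc_subset_Icc le_rfl hα1.le
  have hIoc : Set.Ioc α 1 ⊆ I01 := fun x hx => ⟨le_of_lt (lt_of_le_of_lt hα0.le hx.1), hx.2⟩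
  set Cg := ∫ y in Set.Icc (0:ℝ) α, g y with hCg
  set Dg := ∫ y in Set.Ioc α 1, g y with hDg
  have inner : ∀ x : ℝ, (∫ y in I01, f x * g y * blockW α β₁ β₂ x y)
      = f x * (if x ≤ α then β₁ * Cg else β₂ * Dg) := by
    intro x
    by_cases hx : x ≤ α
    · rw [if_pos hx]
      have e1 : ∀ y ∈ Set.Icc (0:ℝ) α, f x * g y * blockW α β₁ β₂ x y = (f x * β₁) * g y := by
        intro y hy; simp only [blockW, hx, hy.2, and_self, if_true, true_and]; ring
      have e2 : ∀ y ∈ Set.Ioc α 1, f x * g y * blockW α β₁ β₂ x y = 0 := by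
        intro y hy
        have : blockW α β₁ β₂ x y = 0 := by
          simp only [blockW, not_le.2 hy.1, and_false, if_false, not_lt.2 hx, false_and]
        rw [this]; ring
      rw [split_I01 α hα0.le hα1.le
          (IntegrableOn.congr_fun ((int01 hg hgb hIcc).const_mul (f x * β₁))
            (fun y hy => (e1 y hy).symm) measurableSet_Icc)
          (IntegrableOn.congr_fun (integrableOn_const (by simp [Real.volume_Ioc]))
            (fun y hy => (e2 y hy).symm) measurableSet_Ioc),
        setIntegral_congr_fun measurableSet_Icc e1,
        setIntegral_congr_fun measurableSet_Ioc e2, integral_const_mul]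
      simp; ring
    · rw [if_neg hx]
      have hx' : α < x := not_le.1 hx
      have e2 : ∀ y ∈ Set.Icc (0:ℝ) α, f x * g y * blockW α β₁ β₂ x y = 0 := by
        intro y hy
        have : blockW α β₁ β₂ x y = 0 := by
          simp only [blockW, hx, false_and, if_false, not_lt.2 hy.2, and_false]
        rw [this]; ring
      have e1 : ∀ y ∈ Set.Ioc α 1, f x * g y * blockW α β₁ β₂ x y = (f x * β₂) * g y := by
        intro y hy
        simp only [blockW, hx, false_and, if_false, hx', hy.1, and_self, if_true]; ring
      rw [split_I01 α hα0.le hα1.le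
          (IntegrableOn.congr_fun (integrableOn_const (by simp [Real.volume_Icc]))
            (fun y hy => (e2 y hy).symm) measurableSet_Icc)
          (IntegrableOn.congr_fun ((int01 hg hgb hIoc).const_mul (f x * β₂))
            (fun y hy => (e1 y hy).symm) measurableSet_Ioc),
        setIntegral_congr_fun measurableSet_Icc e2,
        setIntegral_congr_fun measurableSet_Ioc e1, integral_const_mul]
      simp; ring
  rw [show (fun x => ∫ y in I01, f x * g y * blockW α β₁ β₂ x y)
      = fun x => f x * (if x ≤ α then β₁ * Cg else β₂ * Dg) from funext inner]
  have o1 : ∀ x ∈ Set.Icc (0:ℝ) α, f x * (if x ≤ α then β₁ * Cg else β₂ * Dg)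
      = (β₁ * Cg) * f x := by
    intro x hx; rw [if_pos hx.2]; ring
  have o2 : ∀ x ∈ Set.Ioc α 1, f x * (if x ≤ α then β₁ * Cg else β₂ * Dg)
      = (β₂ * Dg) * f x := by
    intro x hx; rw [if_neg (not_le.2 hx.1)]; ring
  rw [split_I01 α hα0.le hα1.le
      (IntegrableOn.congr_fun ((int01 hf hfb hIcc).const_mul (β₁ * Cg))
        (fun x hx => (o1 x hx).symm) measurableSet_Icc)
      (IntegrableOn.congr_fun ((int01 hf hfb hIoc).const_mul (β₂ * Dg))
        (fun x hx => (o2 x hx).symm) measurableSet_Ioc),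
    setIntegral_congr_fun measurableSet_Icc o1,
    setIntegral_congr_fun measurableSet_Ioc o2, integral_const_mul, integral_const_mul]
  ring

/-- Energy of a 2-partition for the MAXCUT matrix. -/
lemma energy_maxcut (W : ℝ → ℝ → ℝ) (ρ : FracPartition 2) :
    energy W (!![0, 1; 1, 0] : Matrix (Fin 2) (Fin 2) ℝ) ρ =
      -((∫ x in I01, ∫ y in I01, ρ.toFun 0 x * ρ.toFun 1 y * W x y)
        + (∫ x in I01, ∫ y in I01, ρ.toFun 1 x * ρ.toFun 0 y * W x y)) := by
  simp [energy, Fin.sum_univ_two, Matrix.cons_val_zero, Matrix.cons_val_one, Matrix.head_cons]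

lemma sum_int (α β₁ β₂ : ℝ) (hα0 : 0 < α) (hα1 : α < 1) (ρ : FracPartition 2)
    {s : Set ℝ} (hsub : s ⊆ I01) (hms : MeasurableSet s) :
    (∫ x in s, ρ.toFun 0 x) + (∫ x in s, ρ.toFun 1 x) = (volume s).toReal := by
  rw [← integral_add (int01 (ρ.measurable 0) (ρ.mem_I01 0) hsub)
    (int01 (ρ.measurable 1) (ρ.mem_I01 1) hsub)]
  have : ∀ x ∈ s, ρ.toFun 0 x + ρ.toFun 1 x = (1:ℝ) := by
    intro x hx
    have := ρ.sum_one x (hsub hx)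
    rwa [Fin.sum_univ_two] at this
  rw [setIntegral_congr_fun hms this]
  simp
  rfl

/-- Lower bound for the energy. -/
lemma energy_lb (α β₁ β₂ : ℝ) (hα0 : 0 < α) (hα1 : α < 1)
    (hβ₁ : 0 ≤ β₁) (hβ₂ : 0 ≤ β₂) (ρ : FracPartition 2) :
    -((α ^ 2 * β₁ + (1 - α) ^ 2 * β₂) / 2)
      ≤ energy (blockW α β₁ β₂) (!![0, 1; 1, 0] : Matrix (Fin 2) (Fin 2) ℝ) ρ := by
  have hIcc : Set.Icc (0:ℝ) α ⊆ I01 := Set.Icc_subset_Icc le_rfl hα1.le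
  have hIoc : Set.Ioc α 1 ⊆ I01 := fun x hx => ⟨le_of_lt (lt_of_le_of_lt hα0.le hx.1), hx.2⟩
  set A0 := ∫ x in Set.Icc (0:ℝ) α, ρ.toFun 0 x with hA0
  set A1 := ∫ x in Set.Icc (0:ℝ) α, ρ.toFun 1 x with hA1
  set B0 := ∫ x in Set.Ioc α 1, ρ.toFun 0 x with hB0
  set B1 := ∫ x in Set.Ioc α 1, ρ.toFun 1 x with hB1
  have hsA : A0 + A1 = α := by
    rw [hA0, hA1, sum_int α β₁ β₂ hα0 hα1 ρ hIcc measurableSet_Icc, Real.volume_Icc,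
      ENNReal.toReal_ofReal (by linarith)]
    ring
  have hsB : B0 + B1 = 1 - α := by
    rw [hB0, hB1, sum_int α β₁ β₂ hα0 hα1 ρ hIoc measurableSet_Ioc, Real.volume_Ioc,
      ENNReal.toReal_ofReal (by linarith)]
  have hposA0 : 0 ≤ A0 := setIntegral_nonneg measurableSet_Icc
    (fun x hx => (ρ.mem_I01 0 x (hIcc hx)).1)
  have hposA1 : 0 ≤ A1 := setIntegral_nonneg measurableSet_Icc
    (fun x hx => (ρ.mem_I01 1 x (hIcc hx)).1)
  have hposB0 : 0 ≤ B0 := setIntegral_nonneg measurableSet_Ioc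
    (fun x hx => (ρ.mem_I01 0 x (hIoc hx)).1)
  have hposB1 : 0 ≤ B1 := setIntegral_nonneg measurableSet_Ioc
    (fun x hx => (ρ.mem_I01 1 x (hIoc hx)).1)
  rw [energy_maxcut,
    block_double α β₁ β₂ hα0 hα1 (ρ.measurable 0) (ρ.measurable 1) (ρ.mem_I01 0) (ρ.mem_I01 1),
    block_double α β₁ β₂ hα0 hα1 (ρ.measurable 1) (ρ.measurable 0) (ρ.mem_I01 1) (ρ.mem_I01 0)]
  rw [← hA0, ← hA1, ← hB0, ← hB1]
  have h2 : α ^ 2 = (A0 + A1) ^ 2 := by rw [hsA]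
  have h3 : (1 - α) ^ 2 = (B0 + B1) ^ 2 := by rw [hsB]
  rw [h2, h3]
  nlinarith [mul_nonneg hβ₁ (sq_nonneg (A0 - A1)), mul_nonneg hβ₂ (sq_nonneg (B0 - B1))]

theorem stmt15 (α β₁ β₂ : ℝ) (hα0 : 0 < α) (hα1 : α < 1)
    (hβ₁ : 0 ≤ β₁) (hβ₂ : 0 ≤ β₂) :
    -gse (blockW α β₁ β₂) (!![0, 1; 1, 0] : Matrix (Fin 2) (Fin 2) ℝ) =
      (α ^ 2 * β₁ + (1 - α) ^ 2 * β₂) / 2 := by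
  set e₀ : ℝ := -((α ^ 2 * β₁ + (1 - α) ^ 2 * β₂) / 2) with he₀
  -- the optimal partition
  set S : Set ℝ := Set.Icc 0 (α/2) ∪ Set.Ioc α ((1+α)/2) with hSdef
  have hS : MeasurableSet S := measurableSet_Icc.union measurableSet_Ioc
  have hmeas : Measurable (S.indicator (fun _ => (1:ℝ))) :=
    (measurable_const).indicator hS
  have hbdd0 : ∀ x ∈ I01, S.indicator (fun _ => (1:ℝ)) x ∈ I01 := by
    intro x _
    by_cases hx : x ∈ S <;> simp [Set.indicator_apply, hx, I01]
  have hbdd1 : ∀ x ∈ I01, 1 - S.indicator (fun _ => (1:ℝ)) x ∈ I01 := by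
    intro x _
    by_cases hx : x ∈ S <;> simp [Set.indicator_apply, hx, I01]
  set ρ₀ : FracPartition 2 :=
    { toFun := ![S.indicator (fun _ => (1:ℝ)), fun x => 1 - S.indicator (fun _ => (1:ℝ)) x]
      measurable := by
        intro i
        fin_cases i
        · exact hmeas
        · exact measurable_const.sub hmeas
      mem_I01 := by
        intro i x hx
        fin_cases i
        · exact hbdd0 x hx
        · exact hbdd1 x hx
      sum_one := by
        intro x _
        rw [Fin.sum_univ_two]
        simp } with hρ₀
  have hiIcc : Set.Icc (0:ℝ) α ∩ S = Set.Icc 0 (α/2) := by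
    ext x
    simp only [hSdef, Set.mem_inter_iff, Set.mem_union, Set.mem_Icc, Set.mem_Ioc]
    constructor
    · rintro ⟨⟨hx0, hxa⟩, (⟨h1, h2⟩ | ⟨h1, h2⟩)⟩
      · exact ⟨hx0, h2⟩
      · linarith
    · rintro ⟨h1, h2⟩
      exact ⟨⟨h1, by linarith⟩, Or.inl ⟨h1, h2⟩⟩
  have hiIoc : Set.Ioc α 1 ∩ S = Set.Ioc α ((1+α)/2) := by
    ext x
    simp only [hSdef, Set.mem_inter_iff, Set.mem_union, Set.mem_Icc, Set.mem_Ioc]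
    constructor
    · rintro ⟨⟨hx0, hxa⟩, (⟨h1, h2⟩ | ⟨h1, h2⟩)⟩
      · linarith
      · exact ⟨h1, h2⟩
    · rintro ⟨h1, h2⟩
      exact ⟨⟨h1, by linarith⟩, Or.inr ⟨h1, h2⟩⟩
  have hintA0 : (∫ x in Set.Icc (0:ℝ) α, ρ₀.toFun 0 x) = α/2 := by
    show (∫ x in Set.Icc (0:ℝ) α, S.indicator (fun _ => (1:ℝ)) x) = α/2
    rw [setIntegral_indicator hS, hiIcc]
    rw [setIntegral_const, Measure.real_def, Real.volume_Icc, ENNReal.toReal_ofReal (by linarith), smul_eq_mul]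
    ring
  have hintB0 : (∫ x in Set.Ioc α 1, ρ₀.toFun 0 x) = (1-α)/2 := by
    show (∫ x in Set.Ioc α 1, S.indicator (fun _ => (1:ℝ)) x) = (1-α)/2
    rw [setIntegral_indicator hS, hiIoc]
    rw [setIntegral_const, Measure.real_def, Real.volume_Ioc, ENNReal.toReal_ofReal (by linarith), smul_eq_mul]
    ring
  have hIcc : Set.Icc (0:ℝ) α ⊆ I01 := Set.Icc_subset_Icc le_rfl hα1.le
  have hIoc : Set.Ioc α 1 ⊆ I01 := fun x hx => ⟨le_of_lt (lt_of_le_of_lt hα0.le hx.1), hx.2⟩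
  have hintA1 : (∫ x in Set.Icc (0:ℝ) α, ρ₀.toFun 1 x) = α/2 := by
    have := sum_int α β₁ β₂ hα0 hα1 ρ₀ hIcc measurableSet_Icc
    rw [hintA0, Real.volume_Icc, ENNReal.toReal_ofReal (by linarith)] at this
    linarith
  have hintB1 : (∫ x in Set.Ioc α 1, ρ₀.toFun 1 x) = (1-α)/2 := by
    have := sum_int α β₁ β₂ hα0 hα1 ρ₀ hIoc measurableSet_Ioc
    rw [hintB0, Real.volume_Ioc, ENNReal.toReal_ofReal (by linarith)] at this
    linarith
  have henergy : energy (blockW α β₁ β₂) (!![0, 1; 1, 0] : Matrix (Fin 2) (Fin 2) ℝ) ρ₀ = e₀ := by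
    rw [energy_maxcut,
      block_double α β₁ β₂ hα0 hα1 (ρ₀.measurable 0) (ρ₀.measurable 1)
        (ρ₀.mem_I01 0) (ρ₀.mem_I01 1),
      block_double α β₁ β₂ hα0 hα1 (ρ₀.measurable 1) (ρ₀.measurable 0)
        (ρ₀.mem_I01 1) (ρ₀.mem_I01 0),
      hintA0, hintA1, hintB0, hintB1, he₀]
    ring
  have hgse : gse (blockW α β₁ β₂) (!![0, 1; 1, 0] : Matrix (Fin 2) (Fin 2) ℝ) = e₀ := by
    apply le_antisymm
    · exact csInf_le ⟨e₀, fun e ⟨ρ, he⟩ => he ▸ energy_lb α β₁ β₂ hα0 hα1 hβ₁ hβ₂ ρ⟩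
        ⟨ρ₀, henergy.symm⟩
    · exact le_csInf ⟨e₀, ρ₀, henergy.symm⟩ (fun e ⟨ρ, he⟩ =>
        he ▸ energy_lb α β₁ β₂ hα0 hα1 hβ₁ hβ₂ ρ)
  rw [hgse, he₀]
  ring
end
end

section
/- Let W be a block-diagonal graphon with parameters 0 < α < 1 and β₁, β₂ > 0 (W = β₁ on [0,α]², W = β₂ on (α,1]², 0 elsewhere), and let 0 < c ≤ 1/2 with min(α, 1−α) ≥ c. For k ≥ 1 let J_k be the symmetric 2×2 matrix with entries J_k = [[1, −k], [−k, 2]]. Then lim_{k→∞} −E^c(W, J_k) = α²β₁ + (1−α)²β₂ + max(α²β₁, (1−α)²β₂). -/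
open MeasureTheory Filter

noncomputable section

open Set in
lemma I01_eq : I01 = Set.Icc (0:ℝ) 1 := rfl

lemma measurableSet_I01 : MeasurableSet I01 := measurableSet_Icc

lemma intOn_of_bound {f : ℝ → ℝ} (hm : Measurable f) (C : ℝ)
    (hb : ∀ x ∈ I01, |f x| ≤ C) : IntegrableOn f I01 := by
  have : IsFiniteMeasure (volume.restrict I01) := by
    constructor
    rw [Measure.restrict_apply_univ, I01_eq, Real.volume_Icc]
    exact ENNReal.ofReal_lt_top
  apply Integrable.mono' (integrable_const C) hm.aestronglyMeasurable.restrict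
  filter_upwards [ae_restrict_mem measurableSet_I01] with x hx using hb x hx

lemma intOn_rho (ρ : FracPartition 2) (i : Fin 2) : IntegrableOn (ρ.toFun i) I01 := by
  refine intOn_of_bound (ρ.measurable i) 1 fun x hx => ?_
  have := ρ.mem_I01 i x hx
  rw [I01_eq] at this
  rw [abs_le]; constructor <;> linarith [this.1, this.2]

lemma I01_split {α : ℝ} (h0 : 0 ≤ α) (h1 : α ≤ 1) {f : ℝ → ℝ} (hf : IntegrableOn f I01) :
    ∫ x in I01, f x = (∫ x in Set.Icc 0 α, f x) + ∫ x in Set.Ioc α 1, f x := by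
  have hunion : Set.Icc (0:ℝ) α ∪ Set.Ioc α 1 = I01 := Set.Icc_union_Ioc_eq_Icc h0 h1
  have hdisj : Disjoint (Set.Icc (0:ℝ) α) (Set.Ioc α 1) :=
    Set.disjoint_left.mpr fun x hx hx' => absurd hx.2 (not_le.mpr hx'.1)
  rw [← hunion]
  exact setIntegral_union hdisj measurableSet_Ioc
    (hf.mono_set (hunion ▸ Set.subset_union_left))
    (hf.mono_set (hunion ▸ Set.subset_union_right))
lemma intOn_sub (ρ : FracPartition 2) (i : Fin 2) {s : Set ℝ} (hs : s ⊆ I01) :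
    IntegrableOn (ρ.toFun i) s := (intOn_rho ρ i).mono_set hs

lemma Icc_sub_I01 {α : ℝ} (h1 : α ≤ 1) : Set.Icc (0:ℝ) α ⊆ I01 :=
  Set.Icc_subset_Icc le_rfl h1

lemma Ioc_sub_I01 {α : ℝ} (h0 : 0 ≤ α) : Set.Ioc α (1:ℝ) ⊆ I01 :=
  fun x hx => ⟨le_trans h0 hx.1.le, hx.2⟩

lemma double_int {α β₁ β₂ : ℝ} (h0 : 0 ≤ α) (h1 : α ≤ 1) (ρ : FracPartition 2) (i j : Fin 2) :
    (∫ x in I01, ∫ y in I01, ρ.toFun i x * ρ.toFun j y * blockW α β₁ β₂ x y)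
      = β₁ * (∫ x in Set.Icc 0 α, ρ.toFun i x) * (∫ x in Set.Icc 0 α, ρ.toFun j x)
      + β₂ * (∫ x in Set.Ioc α 1, ρ.toFun i x) * (∫ x in Set.Ioc α 1, ρ.toFun j x) := by
  classical
  set SAj := ∫ x in Set.Icc (0:ℝ) α, ρ.toFun j x with hSAj
  set SBj := ∫ x in Set.Ioc α (1:ℝ), ρ.toFun j x with hSBj
  have hjA : IntegrableOn (ρ.toFun j) (Set.Icc (0:ℝ) α) := intOn_sub ρ j (Icc_sub_I01 h1)
  have hjB : IntegrableOn (ρ.toFun j) (Set.Ioc α (1:ℝ)) := intOn_sub ρ j (Ioc_sub_I01 h0)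
  have hinner : ∀ x : ℝ, (∫ y in I01, ρ.toFun i x * ρ.toFun j y * blockW α β₁ β₂ x y)
      = ρ.toFun i x * (if x ≤ α then β₁ * SAj else β₂ * SBj) := by
    intro x
    by_cases hx : x ≤ α
    · have heq : ∀ y : ℝ, ρ.toFun i x * ρ.toFun j y * blockW α β₁ β₂ x y
          = ρ.toFun i x * (ρ.toFun j y * (if y ≤ α then β₁ else 0)) := by
        intro y
        unfold blockW
        by_cases hy : y ≤ α
        · simp [hx, hy]; ring
        · simp [hy, not_lt.mpr hx]

      simp only [heq]
      rw [integral_const_mul]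
      have hint : IntegrableOn (fun y => ρ.toFun j y * (if y ≤ α then β₁ else 0)) I01 := by
        refine intOn_of_bound ((ρ.measurable j).mul
          (Measurable.ite (measurableSet_le measurable_id measurable_const)
            measurable_const measurable_const)) |β₁| fun y hy => ?_
        have hm := ρ.mem_I01 j y hy
        rw [I01_eq] at hm
        rw [abs_mul]
        have h1' : |ρ.toFun j y| ≤ 1 := abs_le.mpr ⟨by linarith [hm.1], hm.2⟩
        have h2' : |if y ≤ α then β₁ else 0| ≤ |β₁| := by
          split_ifs <;> simp [abs_nonneg]
        calc |ρ.toFun j y| * |if y ≤ α then β₁ else 0| ≤ 1 * |β₁| :=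
          mul_le_mul h1' h2' (abs_nonneg _) zero_le_one
        _ = |β₁| := one_mul _
      rw [I01_split h0 h1 hint]
      have e1 : (∫ y in Set.Icc (0:ℝ) α, ρ.toFun j y * (if y ≤ α then β₁ else 0))
          = β₁ * SAj := by
        rw [show β₁ * SAj = ∫ y in Set.Icc (0:ℝ) α, β₁ * ρ.toFun j y by
          rw [integral_const_mul]]
        refine setIntegral_congr_fun measurableSet_Icc fun y hy => ?_
        simp [hy.2]; ring
      have e2 : (∫ y in Set.Ioc α (1:ℝ), ρ.toFun j y * (if y ≤ α then β₁ else 0)) = 0 := by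
        have hz : ∀ y ∈ Set.Ioc α (1:ℝ), ρ.toFun j y * (if y ≤ α then β₁ else 0) = 0 := by
          intro y hy; simp [not_le.mpr hy.1]
        rw [setIntegral_congr_fun measurableSet_Ioc hz, integral_zero]
      rw [e1, e2, if_pos hx]
      ring
    · have heq : ∀ y : ℝ, ρ.toFun i x * ρ.toFun j y * blockW α β₁ β₂ x y
          = ρ.toFun i x * (ρ.toFun j y * (if y ≤ α then 0 else β₂)) := by
        intro y
        unfold blockW
        by_cases hy : y ≤ α
        · simp [hx, hy, not_lt.mpr hy]
        · simp [hx, hy, not_le.mp hx, not_le.mp hy]; ring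
      simp only [heq]
      rw [integral_const_mul]
      have hint : IntegrableOn (fun y => ρ.toFun j y * (if y ≤ α then 0 else β₂)) I01 := by
        refine intOn_of_bound ((ρ.measurable j).mul
          (Measurable.ite (measurableSet_le measurable_id measurable_const)
            measurable_const measurable_const)) |β₂| fun y hy => ?_
        have hm := ρ.mem_I01 j y hy
        rw [I01_eq] at hm
        rw [abs_mul]
        have h1' : |ρ.toFun j y| ≤ 1 := abs_le.mpr ⟨by linarith [hm.1], hm.2⟩
        have h2' : |if y ≤ α then 0 else β₂| ≤ |β₂| := by
          split_ifs <;> simp [abs_nonneg]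
        calc |ρ.toFun j y| * |if y ≤ α then 0 else β₂| ≤ 1 * |β₂| :=
          mul_le_mul h1' h2' (abs_nonneg _) zero_le_one
        _ = |β₂| := one_mul _
      rw [I01_split h0 h1 hint]
      have e1 : (∫ y in Set.Icc (0:ℝ) α, ρ.toFun j y * (if y ≤ α then 0 else β₂)) = 0 := by
        have hz : ∀ y ∈ Set.Icc (0:ℝ) α, ρ.toFun j y * (if y ≤ α then 0 else β₂) = 0 := by
          intro y hy; simp [hy.2]
        rw [setIntegral_congr_fun measurableSet_Icc hz, integral_zero]
      have e2 : (∫ y in Set.Ioc α (1:ℝ), ρ.toFun j y * (if y ≤ α then 0 else β₂))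
          = β₂ * SBj := by
        rw [show β₂ * SBj = ∫ y in Set.Ioc α (1:ℝ), β₂ * ρ.toFun j y by
          rw [integral_const_mul]]
        refine setIntegral_congr_fun measurableSet_Ioc fun y hy => ?_
        simp [not_le.mpr hy.1]; ring
      rw [e1, e2, if_neg hx]
      ring
  simp only [hinner]
  have hint2 : IntegrableOn (fun x => ρ.toFun i x * (if x ≤ α then β₁ * SAj else β₂ * SBj)) I01 := by
    refine intOn_of_bound ((ρ.measurable i).mul
      (Measurable.ite (measurableSet_le measurable_id measurable_const)
        measurable_const measurable_const)) (|β₁ * SAj| + |β₂ * SBj|) fun x hx => ?_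
    have hm := ρ.mem_I01 i x hx
    rw [I01_eq] at hm
    rw [abs_mul]
    have h1' : |ρ.toFun i x| ≤ 1 := abs_le.mpr ⟨by linarith [hm.1], hm.2⟩
    have h2' : |if x ≤ α then β₁ * SAj else β₂ * SBj| ≤ |β₁ * SAj| + |β₂ * SBj| := by
      split_ifs
      · linarith [abs_nonneg (β₂ * SBj)]
      · linarith [abs_nonneg (β₁ * SAj)]
    calc |ρ.toFun i x| * |if x ≤ α then β₁ * SAj else β₂ * SBj|
        ≤ 1 * (|β₁ * SAj| + |β₂ * SBj|) :=
      mul_le_mul h1' h2' (abs_nonneg _) (by linarith [abs_nonneg (β₁*SAj), abs_nonneg (β₂*SBj)])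
      _ = _ := one_mul _
  rw [I01_split h0 h1 hint2]
  have e1 : (∫ x in Set.Icc (0:ℝ) α, ρ.toFun i x * (if x ≤ α then β₁ * SAj else β₂ * SBj))
      = β₁ * (∫ x in Set.Icc (0:ℝ) α, ρ.toFun i x) * SAj := by
    rw [show β₁ * (∫ x in Set.Icc (0:ℝ) α, ρ.toFun i x) * SAj
        = ∫ x in Set.Icc (0:ℝ) α, (β₁ * SAj) * ρ.toFun i x by rw [integral_const_mul]; ring]
    refine setIntegral_congr_fun measurableSet_Icc fun x hx => ?_
    rw [if_pos hx.2]; ring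
  have e2 : (∫ x in Set.Ioc α (1:ℝ), ρ.toFun i x * (if x ≤ α then β₁ * SAj else β₂ * SBj))
      = β₂ * (∫ x in Set.Ioc α (1:ℝ), ρ.toFun i x) * SBj := by
    rw [show β₂ * (∫ x in Set.Ioc α (1:ℝ), ρ.toFun i x) * SBj
        = ∫ x in Set.Ioc α (1:ℝ), (β₂ * SBj) * ρ.toFun i x by rw [integral_const_mul]; ring]
    refine setIntegral_congr_fun measurableSet_Ioc fun x hx => ?_
    rw [if_neg (not_le.mpr hx.1)]; ring
  rw [e1, e2]
lemma energy_formula {α β₁ β₂ : ℝ} (h0 : 0 ≤ α) (h1 : α ≤ 1) (k : ℝ) (ρ : FracPartition 2) :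
    energy (blockW α β₁ β₂) (!![1, -k; -k, 2]) ρ
      = -(β₁ * (∫ x in Set.Icc 0 α, ρ.toFun 0 x)^2 + β₂ * (∫ x in Set.Ioc α 1, ρ.toFun 0 x)^2)
        - 2 * (β₁ * (∫ x in Set.Icc 0 α, ρ.toFun 1 x)^2 + β₂ * (∫ x in Set.Ioc α 1, ρ.toFun 1 x)^2)
        + 2 * k * (β₁ * (∫ x in Set.Icc 0 α, ρ.toFun 0 x) * (∫ x in Set.Icc 0 α, ρ.toFun 1 x)
            + β₂ * (∫ x in Set.Ioc α 1, ρ.toFun 0 x) * (∫ x in Set.Ioc α 1, ρ.toFun 1 x)) := by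
  unfold energy
  rw [Fin.sum_univ_two, Fin.sum_univ_two, Fin.sum_univ_two]
  rw [double_int h0 h1 ρ 0 0, double_int h0 h1 ρ 0 1, double_int h0 h1 ρ 1 0,
    double_int h0 h1 ρ 1 1]
  simp [Matrix.cons_val_zero, Matrix.cons_val_one, Matrix.head_cons]
  ring

lemma int_A_nonneg {α : ℝ} (h1 : α ≤ 1) (ρ : FracPartition 2) (i : Fin 2) :
    0 ≤ ∫ x in Set.Icc 0 α, ρ.toFun i x :=
  setIntegral_nonneg measurableSet_Icc fun x hx => (ρ.mem_I01 i x (Icc_sub_I01 h1 hx)).1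

lemma int_B_nonneg {α : ℝ} (h0 : 0 ≤ α) (ρ : FracPartition 2) (i : Fin 2) :
    0 ≤ ∫ x in Set.Ioc α 1, ρ.toFun i x :=
  setIntegral_nonneg measurableSet_Ioc fun x hx => (ρ.mem_I01 i x (Ioc_sub_I01 h0 hx)).1

lemma int_A_one {α : ℝ} (h0 : 0 ≤ α) : (∫ x in Set.Icc (0:ℝ) α, (1:ℝ)) = α := by
  simp [Real.volume_Icc, ENNReal.toReal_ofReal, h0]

lemma int_B_one {α : ℝ} (h1 : α ≤ 1) : (∫ x in Set.Ioc α (1:ℝ), (1:ℝ)) = 1 - α := by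
  simp [Real.volume_Ioc, ENNReal.toReal_ofReal, sub_nonneg.mpr h1]

lemma sum_A {α : ℝ} (h0 : 0 ≤ α) (h1 : α ≤ 1) (ρ : FracPartition 2) :
    (∫ x in Set.Icc 0 α, ρ.toFun 0 x) + (∫ x in Set.Icc 0 α, ρ.toFun 1 x) = α := by
  rw [← integral_add (intOn_sub ρ 0 (Icc_sub_I01 h1)) (intOn_sub ρ 1 (Icc_sub_I01 h1))]
  conv_rhs => rw [← int_A_one h0 (α := α)]
  refine setIntegral_congr_fun measurableSet_Icc fun x hx => ?_
  have := ρ.sum_one x (Icc_sub_I01 h1 hx)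
  rwa [Fin.sum_univ_two] at this

lemma sum_B {α : ℝ} (h0 : 0 ≤ α) (h1 : α ≤ 1) (ρ : FracPartition 2) :
    (∫ x in Set.Ioc α 1, ρ.toFun 0 x) + (∫ x in Set.Ioc α 1, ρ.toFun 1 x) = 1 - α := by
  rw [← integral_add (intOn_sub ρ 0 (Ioc_sub_I01 h0)) (intOn_sub ρ 1 (Ioc_sub_I01 h0))]
  conv_rhs => rw [← int_B_one h1 (α := α)]
  refine setIntegral_congr_fun measurableSet_Ioc fun x hx => ?_
  have := ρ.sum_one x (Ioc_sub_I01 h0 hx)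
  rwa [Fin.sum_univ_two] at this

lemma int_A_le {α : ℝ} (h0 : 0 ≤ α) (h1 : α ≤ 1) (ρ : FracPartition 2) (i : Fin 2) :
    (∫ x in Set.Icc 0 α, ρ.toFun i x) ≤ α := by
  conv_rhs => rw [← int_A_one h0 (α := α)]
  refine setIntegral_mono_on (intOn_sub ρ i (Icc_sub_I01 h1)) (integrable_const 1)
    measurableSet_Icc fun x hx => (ρ.mem_I01 i x (Icc_sub_I01 h1 hx)).2

lemma int_B_le {α : ℝ} (h0 : 0 ≤ α) (h1 : α ≤ 1) (ρ : FracPartition 2) (i : Fin 2) :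
    (∫ x in Set.Ioc α 1, ρ.toFun i x) ≤ 1 - α := by
  conv_rhs => rw [← int_B_one h1 (α := α)]
  refine setIntegral_mono_on (intOn_sub ρ i (Ioc_sub_I01 h0)) (integrable_const 1)
    measurableSet_Ioc fun x hx => (ρ.mem_I01 i x (Ioc_sub_I01 h0 hx)).2
set_option maxHeartbeats 1000000 in
lemma key_ineq' (b1 b2 a m c s t R Dm M : ℝ)
    (hb1 : 0 < b1) (hb2 : 0 < b2) (ha : 0 < a) (hm : 0 < m) (hc : 0 < c)
    (hs0 : 0 ≤ s) (hs1 : s ≤ a) (ht0 : 0 ≤ t) (ht1 : t ≤ m) (hst : c ≤ s + t)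
    (hDm0 : 0 ≤ Dm) (hD1 : Dm ≤ b1 * a) (hD2 : Dm ≤ b2 * m)
    (hmax1 : a^2 * b1 ≤ M) (hmax2 : m^2 * b2 ≤ M)
    (hR2 : 2 ≤ R) (hRN : 2 * (b1 * a^2 + b2 * m^2) ≤ R * (c * Dm / 2)) :
    b1 * s^2 + b2 * t^2 + 2 * (b1 * (a - s)^2 + b2 * (m - t)^2)
      ≤ a^2 * b1 + m^2 * b2 + M + R * (b1 * (s * (a - s)) + b2 * (t * (m - t))) := by
  have hu0 : 0 ≤ s * (a - s) := mul_nonneg hs0 (by linarith)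
  have hv0 : 0 ≤ t * (m - t) := mul_nonneg ht0 (by linarith)
  have hbu : 0 ≤ b1 * (s * (a - s)) := mul_nonneg hb1.le hu0
  have hbv : 0 ≤ b2 * (t * (m - t)) := mul_nonneg hb2.le hv0
  have hX0 : 0 ≤ b1 * (s * (a - s)) + b2 * (t * (m - t)) := by linarith
  have hRX : 0 ≤ (R - 2) * (b1 * (s * (a - s)) + b2 * (t * (m - t))) :=
    mul_nonneg (by linarith) hX0
  have hp1 : (0:ℝ) ≤ a^2 * b1 := by positivity
  have hp2 : (0:ℝ) ≤ m^2 * b2 := by positivity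
  rcases le_or_gt s (a/2) with hsc | hsc
  · rcases le_or_gt t (m/2) with htc | htc
    · -- both small: use c ≤ s + t
      have e1 : b1 * a * (s / 2) ≤ b1 * (s * (a - s)) := by
        nlinarith [mul_nonneg (mul_nonneg hb1.le hs0) (by linarith : (0:ℝ) ≤ a/2 - s)]
      have e2 : b2 * m * (t / 2) ≤ b2 * (t * (m - t)) := by
        nlinarith [mul_nonneg (mul_nonneg hb2.le ht0) (by linarith : (0:ℝ) ≤ m/2 - t)]
      have e3 : Dm * (s / 2) ≤ b1 * a * (s / 2) :=
        mul_le_mul_of_nonneg_right hD1 (by linarith)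
      have e4 : Dm * (t / 2) ≤ b2 * m * (t / 2) :=
        mul_le_mul_of_nonneg_right hD2 (by linarith)
      have e5 : Dm * (c / 2) ≤ Dm * (s / 2) + Dm * (t / 2) := by
        nlinarith [mul_nonneg hDm0 (by linarith : (0:ℝ) ≤ s + t - c)]
      have h1 : Dm * (c / 2) ≤ b1 * (s * (a - s)) + b2 * (t * (m - t)) := by linarith
      have h2 : R * (Dm * (c / 2)) ≤ R * (b1 * (s * (a - s)) + b2 * (t * (m - t))) :=
        mul_le_mul_of_nonneg_left h1 (by linarith)
      have h3 : 2 * (b1 * a^2 + b2 * m^2)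
          ≤ R * (b1 * (s * (a - s)) + b2 * (t * (m - t))) := by
        calc 2 * (b1 * a^2 + b2 * m^2) ≤ R * (c * Dm / 2) := hRN
        _ = R * (Dm * (c / 2)) := by ring
        _ ≤ _ := h2
      have hFa : b1 * s^2 + 2 * (b1 * (a - s)^2) ≤ 2 * (b1 * a^2) := by
        nlinarith [mul_nonneg (mul_nonneg hb1.le hs0) (by linarith : (0:ℝ) ≤ 4*a - 3*s)]
      have hFb : b2 * t^2 + 2 * (b2 * (m - t)^2) ≤ 2 * (b2 * m^2) := by
        nlinarith [mul_nonneg (mul_nonneg hb2.le ht0) (by linarith : (0:ℝ) ≤ 4*m - 3*t)]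
      linarith
    · -- s small, t large
      have hF2 : b2 * t^2 + 2 * (b2 * (m - t)^2) ≤ m^2 * b2 + 2 * (b2 * (t * (m - t))) := by
        nlinarith [mul_nonneg (mul_nonneg hb2.le (by linarith : (0:ℝ) ≤ m - t))
          (by linarith : (0:ℝ) ≤ 5*t - m)]
      have hF1 : b1 * s^2 + 2 * (b1 * (a - s)^2) ≤ 2 * (a^2 * b1) := by
        nlinarith [mul_nonneg (mul_nonneg hb1.le hs0) (by linarith : (0:ℝ) ≤ 4*a - 3*s)]
      have hRv : 2 * (b2 * (t * (m - t)))
          ≤ R * (b1 * (s * (a - s)) + b2 * (t * (m - t))) := by nlinarith [hRX]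
      linarith
  · rcases le_or_gt t (m/2) with htc | htc
    · -- s large, t small
      have hF1 : b1 * s^2 + 2 * (b1 * (a - s)^2) ≤ a^2 * b1 + 2 * (b1 * (s * (a - s))) := by
        nlinarith [mul_nonneg (mul_nonneg hb1.le (by linarith : (0:ℝ) ≤ a - s))
          (by linarith : (0:ℝ) ≤ 5*s - a)]
      have hF2 : b2 * t^2 + 2 * (b2 * (m - t)^2) ≤ 2 * (m^2 * b2) := by
        nlinarith [mul_nonneg (mul_nonneg hb2.le ht0) (by linarith : (0:ℝ) ≤ 4*m - 3*t)]
      have hRu : 2 * (b1 * (s * (a - s)))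
          ≤ R * (b1 * (s * (a - s)) + b2 * (t * (m - t))) := by nlinarith [hRX]
      linarith
    · -- both large
      have hF1 : b1 * s^2 + 2 * (b1 * (a - s)^2) ≤ a^2 * b1 + 2 * (b1 * (s * (a - s))) := by
        nlinarith [mul_nonneg (mul_nonneg hb1.le (by linarith : (0:ℝ) ≤ a - s))
          (by linarith : (0:ℝ) ≤ 5*s - a)]
      have hF2 : b2 * t^2 + 2 * (b2 * (m - t)^2) ≤ m^2 * b2 + 2 * (b2 * (t * (m - t))) := by
        nlinarith [mul_nonneg (mul_nonneg hb2.le (by linarith : (0:ℝ) ≤ m - t))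
          (by linarith : (0:ℝ) ≤ 5*t - m)]
      have hRuv : 2 * (b1 * (s * (a - s))) + 2 * (b2 * (t * (m - t)))
          ≤ R * (b1 * (s * (a - s)) + b2 * (t * (m - t))) := by nlinarith [hRX]
      linarith
/-- Indicator partition: ρ₀ = 1 on [0,α], ρ₁ = 1 on (α,1]. -/
def partA (α : ℝ) : FracPartition 2 where
  toFun := ![fun x => if x ≤ α then 1 else 0, fun x => if x ≤ α then 0 else 1]
  measurable := by
    intro i
    fin_cases i <;>
      exact Measurable.ite (measurableSet_le measurable_id measurable_const)
        measurable_const measurable_const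
  mem_I01 := by
    intro i x _
    fin_cases i <;> simp [I01, Set.mem_Icc] <;> split_ifs <;> norm_num
  sum_one := by
    intro x _
    rw [Fin.sum_univ_two]
    simp only [Matrix.cons_val_zero, Matrix.cons_val_one, Matrix.head_cons]
    split_ifs <;> ring

/-- Swapped indicator partition: ρ₀ = 1 on (α,1], ρ₁ = 1 on [0,α]. -/
def partB (α : ℝ) : FracPartition 2 where
  toFun := ![fun x => if x ≤ α then 0 else 1, fun x => if x ≤ α then 1 else 0]
  measurable := by
    intro i
    fin_cases i <;>
      exact Measurable.ite (measurableSet_le measurable_id measurable_const)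
        measurable_const measurable_const
  mem_I01 := by
    intro i x _
    fin_cases i <;> simp [I01, Set.mem_Icc] <;> split_ifs <;> norm_num
  sum_one := by
    intro x _
    rw [Fin.sum_univ_two]
    simp only [Matrix.cons_val_zero, Matrix.cons_val_one, Matrix.head_cons]
    split_ifs <;> ring

lemma int_ind_A_one {α : ℝ} (h0 : 0 ≤ α) :
    (∫ x in Set.Icc (0:ℝ) α, (if x ≤ α then (1:ℝ) else 0)) = α := by
  rw [setIntegral_congr_fun measurableSet_Icc (fun x hx => if_pos hx.2)]
  exact int_A_one h0

lemma int_ind_A_zero {α : ℝ} :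
    (∫ x in Set.Icc (0:ℝ) α, (if x ≤ α then (0:ℝ) else 1)) = 0 := by
  rw [setIntegral_congr_fun measurableSet_Icc (fun x hx => if_pos hx.2)]
  simp

lemma int_ind_B_zero {α : ℝ} :
    (∫ x in Set.Ioc α (1:ℝ), (if x ≤ α then (1:ℝ) else 0)) = 0 := by
  rw [setIntegral_congr_fun measurableSet_Ioc (fun x hx => if_neg (not_le.mpr hx.1))]
  simp

lemma int_ind_B_one {α : ℝ} (h1 : α ≤ 1) :
    (∫ x in Set.Ioc α (1:ℝ), (if x ≤ α then (0:ℝ) else 1)) = 1 - α := by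
  rw [setIntegral_congr_fun measurableSet_Ioc (fun x hx => if_neg (not_le.mpr hx.1))]
  exact int_B_one h1

lemma energy_partA {α β₁ β₂ : ℝ} (h0 : 0 ≤ α) (h1 : α ≤ 1) (k : ℝ) :
    energy (blockW α β₁ β₂) (!![1, -k; -k, 2]) (partA α)
      = -(β₁ * α^2 + 2 * (β₂ * (1 - α)^2)) := by
  rw [energy_formula h0 h1 k (partA α)]
  show -(β₁ * (∫ x in Set.Icc (0:ℝ) α, (if x ≤ α then (1:ℝ) else 0))^2 + _) - _ + _ = _
  simp only [partA, Matrix.cons_val_zero, Matrix.cons_val_one, Matrix.head_cons]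
  rw [int_ind_A_one h0, int_ind_A_zero, int_ind_B_zero, int_ind_B_one h1]
  ring

lemma energy_partB {α β₁ β₂ : ℝ} (h0 : 0 ≤ α) (h1 : α ≤ 1) (k : ℝ) :
    energy (blockW α β₁ β₂) (!![1, -k; -k, 2]) (partB α)
      = -(β₂ * (1 - α)^2 + 2 * (β₁ * α^2)) := by
  rw [energy_formula h0 h1 k (partB α)]
  simp only [partB, Matrix.cons_val_zero, Matrix.cons_val_one, Matrix.head_cons]
  rw [int_ind_A_one h0, int_ind_A_zero, int_ind_B_zero, int_ind_B_one h1]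
  ring

lemma integral_partA_zero {α : ℝ} (h0 : 0 ≤ α) (h1 : α ≤ 1) :
    (∫ x in I01, (partA α).toFun 0 x) = α := by
  rw [I01_split h0 h1 (intOn_rho (partA α) 0)]
  simp only [partA, Matrix.cons_val_zero]
  rw [int_ind_A_one h0, int_ind_B_zero]; ring

lemma integral_partA_one {α : ℝ} (h0 : 0 ≤ α) (h1 : α ≤ 1) :
    (∫ x in I01, (partA α).toFun 1 x) = 1 - α := by
  rw [I01_split h0 h1 (intOn_rho (partA α) 1)]
  simp only [partA, Matrix.cons_val_one, Matrix.head_cons, Matrix.cons_val_zero]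
  rw [int_ind_A_zero, int_ind_B_one h1]; ring

lemma integral_partB_zero {α : ℝ} (h0 : 0 ≤ α) (h1 : α ≤ 1) :
    (∫ x in I01, (partB α).toFun 0 x) = 1 - α := by
  rw [I01_split h0 h1 (intOn_rho (partB α) 0)]
  simp only [partB, Matrix.cons_val_zero]
  rw [int_ind_A_zero, int_ind_B_one h1]; ring

lemma integral_partB_one {α : ℝ} (h0 : 0 ≤ α) (h1 : α ≤ 1) :
    (∫ x in I01, (partB α).toFun 1 x) = α := by
  rw [I01_split h0 h1 (intOn_rho (partB α) 1)]
  simp only [partB, Matrix.cons_val_one, Matrix.head_cons, Matrix.cons_val_zero]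
  rw [int_ind_A_one h0, int_ind_B_zero]; ring
lemma energy_lb_any {α β₁ β₂ : ℝ} (hα0 : 0 < α) (hα1 : α < 1) (hβ₁ : 0 < β₁) (hβ₂ : 0 < β₂)
    (k : ℕ) (ρ : FracPartition 2) :
    -(3 * (β₁ + β₂)) ≤ energy (blockW α β₁ β₂) (!![1, -(k:ℝ); -(k:ℝ), 2]) ρ := by
  rw [energy_formula hα0.le hα1.le]
  have a0 := int_A_nonneg hα1.le ρ 0
  have a1 := int_A_nonneg hα1.le ρ 1
  have b0 := int_B_nonneg hα0.le ρ 0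
  have b1 := int_B_nonneg hα0.le ρ 1
  have a0' : (∫ x in Set.Icc 0 α, ρ.toFun 0 x) ≤ 1 := le_trans (int_A_le hα0.le hα1.le ρ 0) hα1.le
  have a1' : (∫ x in Set.Icc 0 α, ρ.toFun 1 x) ≤ 1 := le_trans (int_A_le hα0.le hα1.le ρ 1) hα1.le
  have b0' : (∫ x in Set.Ioc α 1, ρ.toFun 0 x) ≤ 1 := le_trans (int_B_le hα0.le hα1.le ρ 0) (by linarith)
  have b1' : (∫ x in Set.Ioc α 1, ρ.toFun 1 x) ≤ 1 := le_trans (int_B_le hα0.le hα1.le ρ 1) (by linarith)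
  have kk : (0:ℝ) ≤ (k:ℝ) := Nat.cast_nonneg k
  nlinarith [mul_nonneg kk (mul_nonneg (mul_nonneg hβ₁.le a0) a1),
    mul_nonneg kk (mul_nonneg (mul_nonneg hβ₂.le b0) b1),
    mul_nonneg hβ₁.le (mul_nonneg (by linarith : (0:ℝ) ≤ 1 - (∫ x in Set.Icc 0 α, ρ.toFun 0 x)) (by linarith : (0:ℝ) ≤ 1 + (∫ x in Set.Icc 0 α, ρ.toFun 0 x))),
    mul_nonneg hβ₁.le (mul_nonneg (by linarith : (0:ℝ) ≤ 1 - (∫ x in Set.Icc 0 α, ρ.toFun 1 x)) (by linarith : (0:ℝ) ≤ 1 + (∫ x in Set.Icc 0 α, ρ.toFun 1 x))),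
    mul_nonneg hβ₂.le (mul_nonneg (by linarith : (0:ℝ) ≤ 1 - (∫ x in Set.Ioc α 1, ρ.toFun 0 x)) (by linarith : (0:ℝ) ≤ 1 + (∫ x in Set.Ioc α 1, ρ.toFun 0 x))),
    mul_nonneg hβ₂.le (mul_nonneg (by linarith : (0:ℝ) ≤ 1 - (∫ x in Set.Ioc α 1, ρ.toFun 1 x)) (by linarith : (0:ℝ) ≤ 1 + (∫ x in Set.Ioc α 1, ρ.toFun 1 x)))]

lemma mgse_lb {α β₁ β₂ : ℝ} (hα0 : 0 < α) (hα1 : α < 1) (hβ₁ : 0 < β₁) (hβ₂ : 0 < β₂)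
    (k : ℕ) (a : Fin 2 → ℝ) :
    -(3 * (β₁ + β₂)) ≤ mgse (blockW α β₁ β₂) (!![1, -(k:ℝ); -(k:ℝ), 2]) a := by
  unfold mgse
  rcases Set.eq_empty_or_nonempty
    {e | ∃ ρ : FracPartition 2, (∀ i, (∫ x in I01, ρ.toFun i x) = a i)
      ∧ e = energy (blockW α β₁ β₂) (!![1, -(k:ℝ); -(k:ℝ), 2]) ρ} with h | h
  · rw [h, Real.sInf_empty]; nlinarith
  · refine le_csInf h ?_
    rintro e ⟨ρ, -, rfl⟩
    exact energy_lb_any hα0 hα1 hβ₁ hβ₂ k ρ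

lemma ltgse_bdd {α β₁ β₂ c : ℝ} (hα0 : 0 < α) (hα1 : α < 1) (hβ₁ : 0 < β₁) (hβ₂ : 0 < β₂)
    (k : ℕ) :
    -(3 * (β₁ + β₂)) ∈ lowerBounds
      {e | ∃ a : Fin 2 → ℝ, IsDist a ∧ (∀ i, (fun _ => c) i ≤ a i)
        ∧ e = mgse (blockW α β₁ β₂) (!![1, -(k:ℝ); -(k:ℝ), 2]) a} := by
  rintro e ⟨a, -, -, rfl⟩
  exact mgse_lb hα0 hα1 hβ₁ hβ₂ k a

lemma distA {α : ℝ} (hα0 : 0 < α) (hα1 : α < 1) : IsDist (![α, 1-α]) := by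
  constructor
  · intro i; fin_cases i <;> simp <;> linarith
  · rw [Fin.sum_univ_two]; simp

lemma distB {α : ℝ} (hα0 : 0 < α) (hα1 : α < 1) : IsDist (![1-α, α]) := by
  constructor
  · intro i; fin_cases i <;> simp <;> linarith
  · rw [Fin.sum_univ_two]; simp

lemma ltgse_le {α β₁ β₂ c : ℝ} (hα0 : 0 < α) (hα1 : α < 1) (hβ₁ : 0 < β₁) (hβ₂ : 0 < β₂)
    (hcα : c ≤ min α (1 - α)) (k : ℕ) :
    ltgse (blockW α β₁ β₂) (!![1, -(k:ℝ); -(k:ℝ), 2]) c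
      ≤ -(α^2 * β₁ + (1-α)^2 * β₂ + max (α^2 * β₁) ((1-α)^2 * β₂)) := by
  have hc1 : c ≤ α := le_trans hcα (min_le_left _ _)
  have hc2 : c ≤ 1 - α := le_trans hcα (min_le_right _ _)
  have hbdd : BddBelow {e | ∃ a : Fin 2 → ℝ, IsDist a ∧ (∀ i, (fun _ => c) i ≤ a i)
      ∧ e = mgse (blockW α β₁ β₂) (!![1, -(k:ℝ); -(k:ℝ), 2]) a} :=
    ⟨_, ltgse_bdd hα0 hα1 hβ₁ hβ₂ k⟩
  rcases le_total (α^2 * β₁) ((1-α)^2 * β₂) with h | h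
  · rw [max_eq_right h]
    have step1 : ltgse (blockW α β₁ β₂) (!![1, -(k:ℝ); -(k:ℝ), 2]) c
        ≤ mgse (blockW α β₁ β₂) (!![1, -(k:ℝ); -(k:ℝ), 2]) ![α, 1-α] := by
      refine csInf_le hbdd ⟨![α, 1-α], distA hα0 hα1, ?_, rfl⟩
      intro i; fin_cases i <;> simpa
    have step2 : mgse (blockW α β₁ β₂) (!![1, -(k:ℝ); -(k:ℝ), 2]) ![α, 1-α]
        ≤ energy (blockW α β₁ β₂) (!![1, -(k:ℝ); -(k:ℝ), 2]) (partA α) := by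
      refine csInf_le ⟨-(3 * (β₁ + β₂)), ?_⟩ ⟨partA α, ?_, rfl⟩
      · rintro e ⟨ρ, -, rfl⟩; exact energy_lb_any hα0 hα1 hβ₁ hβ₂ k ρ
      · intro i; fin_cases i
        · simpa using integral_partA_zero hα0.le hα1.le
        · simpa using integral_partA_one hα0.le hα1.le
    rw [energy_partA hα0.le hα1.le] at step2
    calc ltgse _ _ c ≤ _ := step1
    _ ≤ _ := step2
    _ ≤ _ := by nlinarith
  · rw [max_eq_left h]
    have step1 : ltgse (blockW α β₁ β₂) (!![1, -(k:ℝ); -(k:ℝ), 2]) c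
        ≤ mgse (blockW α β₁ β₂) (!![1, -(k:ℝ); -(k:ℝ), 2]) ![1-α, α] := by
      refine csInf_le hbdd ⟨![1-α, α], distB hα0 hα1, ?_, rfl⟩
      intro i; fin_cases i <;> simpa
    have step2 : mgse (blockW α β₁ β₂) (!![1, -(k:ℝ); -(k:ℝ), 2]) ![1-α, α]
        ≤ energy (blockW α β₁ β₂) (!![1, -(k:ℝ); -(k:ℝ), 2]) (partB α) := by
      refine csInf_le ⟨-(3 * (β₁ + β₂)), ?_⟩ ⟨partB α, ?_, rfl⟩
      · rintro e ⟨ρ, -, rfl⟩; exact energy_lb_any hα0 hα1 hβ₁ hβ₂ k ρ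
      · intro i; fin_cases i
        · simpa using integral_partB_zero hα0.le hα1.le
        · simpa using integral_partB_one hα0.le hα1.le
    rw [energy_partB hα0.le hα1.le] at step2
    calc ltgse _ _ c ≤ _ := step1
    _ ≤ _ := step2
    _ ≤ _ := by nlinarith

lemma ltgse_ge {α β₁ β₂ c : ℝ} (hα0 : 0 < α) (hα1 : α < 1) (hβ₁ : 0 < β₁) (hβ₂ : 0 < β₂)
    (hc0 : 0 < c) (hcα : c ≤ min α (1 - α)) (k : ℕ)
    (hk2 : 2 ≤ 2 * (k:ℝ))
    (hkN : 2 * (β₁ * α^2 + β₂ * (1-α)^2) ≤ 2 * (k:ℝ) * (c * min (β₁ * α) (β₂ * (1-α)) / 2)) :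
    -(α^2 * β₁ + (1-α)^2 * β₂ + max (α^2 * β₁) ((1-α)^2 * β₂))
      ≤ ltgse (blockW α β₁ β₂) (!![1, -(k:ℝ); -(k:ℝ), 2]) c := by
  have hc1 : c ≤ α := le_trans hcα (min_le_left _ _)
  have hc2 : c ≤ 1 - α := le_trans hcα (min_le_right _ _)
  have hLpos : (0:ℝ) ≤ α^2 * β₁ + (1-α)^2 * β₂ + max (α^2 * β₁) ((1-α)^2 * β₂) := by
    have h1 : (0:ℝ) ≤ α^2 * β₁ := by positivity
    have h2 : (0:ℝ) ≤ (1-α)^2 * β₂ := by positivity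
    have := le_max_left (α^2 * β₁) ((1-α)^2 * β₂)
    linarith
  refine le_csInf ⟨_, ![α, 1-α], distA hα0 hα1, fun i => by fin_cases i <;> simpa, rfl⟩ ?_
  rintro e ⟨a, ha, hathr, rfl⟩
  unfold mgse
  rcases Set.eq_empty_or_nonempty
    {e | ∃ ρ : FracPartition 2, (∀ i, (∫ x in I01, ρ.toFun i x) = a i)
      ∧ e = energy (blockW α β₁ β₂) (!![1, -(k:ℝ); -(k:ℝ), 2]) ρ} with h | h
  · rw [h, Real.sInf_empty]; linarith
  · refine le_csInf h ?_
    rintro e ⟨ρ, hρa, rfl⟩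
    rw [energy_formula hα0.le hα1.le]
    have hA := sum_A hα0.le hα1.le ρ
    have hB := sum_B hα0.le hα1.le ρ
    have e1 : (∫ x in Set.Icc 0 α, ρ.toFun 1 x) = α - (∫ x in Set.Icc 0 α, ρ.toFun 0 x) := by
      linarith
    have e2 : (∫ x in Set.Ioc α 1, ρ.toFun 1 x)
        = (1 - α) - (∫ x in Set.Ioc α 1, ρ.toFun 0 x) := by linarith
    rw [e1, e2]
    have hst : c ≤ (∫ x in Set.Icc 0 α, ρ.toFun 0 x) + (∫ x in Set.Ioc α 1, ρ.toFun 0 x) := by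
      have := hρa 0
      rw [I01_split hα0.le hα1.le (intOn_rho ρ 0)] at this
      rw [this]
      exact hathr 0
    have key := key_ineq' β₁ β₂ α (1-α) c (∫ x in Set.Icc 0 α, ρ.toFun 0 x)
      (∫ x in Set.Ioc α 1, ρ.toFun 0 x) (2*(k:ℝ)) (min (β₁ * α) (β₂ * (1-α)))
      (max (α^2 * β₁) ((1-α)^2 * β₂))
      hβ₁ hβ₂ hα0 (by linarith) hc0
      (int_A_nonneg hα1.le ρ 0) (int_A_le hα0.le hα1.le ρ 0)
      (int_B_nonneg hα0.le ρ 0) (int_B_le hα0.le hα1.le ρ 0)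
      hst
      (le_min (mul_nonneg hβ₁.le hα0.le) (mul_nonneg hβ₂.le (by linarith : (0:ℝ) ≤ 1 - α)))
      (min_le_left _ _) (min_le_right _ _)
      (le_max_left _ _) (le_max_right _ _)
      hk2 hkN
    nlinarith [key]
theorem stmt16 (α β₁ β₂ c : ℝ) (hα0 : 0 < α) (hα1 : α < 1)
    (hβ₁ : 0 < β₁) (hβ₂ : 0 < β₂)
    (hc0 : 0 < c) (hc2 : c ≤ 1 / 2) (hcα : c ≤ min α (1 - α)) :
    Tendsto (fun k : ℕ =>
        -ltgse (blockW α β₁ β₂) (!![1, -(k : ℝ); -(k : ℝ), 2]) c)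
      atTop
      (nhds (α ^ 2 * β₁ + (1 - α) ^ 2 * β₂ +
        max (α ^ 2 * β₁) ((1 - α) ^ 2 * β₂))) := by
  have hDm0 : (0:ℝ) < c * min (β₁ * α) (β₂ * (1-α)) := by
    have : (0:ℝ) < min (β₁ * α) (β₂ * (1-α)) :=
      lt_min (mul_pos hβ₁ hα0) (mul_pos hβ₂ (by linarith))
    positivity
  obtain ⟨K, hK⟩ := exists_nat_ge (2 * (β₁ * α^2 + β₂ * (1-α)^2) / (c * min (β₁ * α) (β₂ * (1-α))))
  have heq : (fun k : ℕ => -ltgse (blockW α β₁ β₂) (!![1, -(k : ℝ); -(k : ℝ), 2]) c)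
      =ᶠ[atTop] (fun _ : ℕ => α ^ 2 * β₁ + (1 - α) ^ 2 * β₂ +
        max (α ^ 2 * β₁) ((1 - α) ^ 2 * β₂)) := by
    filter_upwards [eventually_ge_atTop (max K 1)] with k hk
    have hk1 : (1:ℕ) ≤ k := le_trans (le_max_right _ _) hk
    have hkK : (K:ℝ) ≤ (k:ℝ) := Nat.cast_le.mpr (le_trans (le_max_left _ _) hk)
    have hk2 : (2:ℝ) ≤ 2 * (k:ℝ) := by
      have : (1:ℝ) ≤ (k:ℝ) := by exact_mod_cast hk1
      linarith
    have hkN : 2 * (β₁ * α^2 + β₂ * (1-α)^2)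
        ≤ 2 * (k:ℝ) * (c * min (β₁ * α) (β₂ * (1-α)) / 2) := by
      have h1 : 2 * (β₁ * α^2 + β₂ * (1-α)^2)
          ≤ (k:ℝ) * (c * min (β₁ * α) (β₂ * (1-α))) := by
        rw [← div_le_iff₀ hDm0] at *
        linarith
      linarith [h1]
    have hle := ltgse_le hα0 hα1 hβ₁ hβ₂ hcα (c := c) k
    have hge := ltgse_ge hα0 hα1 hβ₁ hβ₂ hc0 hcα k hk2 hkN
    have : ltgse (blockW α β₁ β₂) (!![1, -(k : ℝ); -(k : ℝ), 2]) c
        = -(α^2 * β₁ + (1-α)^2 * β₂ + max (α^2 * β₁) ((1-α)^2 * β₂)) :=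
      le_antisymm hle hge
    rw [this]
    ring
  exact Tendsto.congr' heq.symm tendsto_const_nhds
end
end
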